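/- Let M be a real symmetric n×n matrix with spectral decomposition M = Σ_r θ_r E_r, let u ≠ v, and let θ_s satisfy (E_s)_{v,u} > 0. Then |(e^{iτM})_{v,u}| = Σ_r |(E_r)_{v,u}| at time τ > 0 if and only if τ(θ_s − θ_r) is an even multiple of π for every θ_r with (E_r)_{v,u} > 0 and an odd multiple of π for every θ_r with (E_r)_{v,u} < 0. -/

import Mathlib

lemma re_eq_abs' {z : ℂ} (h : z.re = ‖z‖) : z = (‖z‖ : ℂ) := by
  have h2 : ‖z‖ ^ 2 = z.re ^ 2 + z.im ^ 2 := by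
    rw [Complex.sq_norm, Complex.normSq_apply]; ring
  rw [← h] at h2
  have him : z.im = 0 := by nlinarith [sq_nonneg z.im]
  apply Complex.ext <;> simp [← h, him]

lemma exp_I_eq_one_iff' {x : ℝ} :
    Complex.exp (Complex.I * x) = 1 ↔ ∃ n : ℤ, x = n * (2 * Real.pi) := by
  rw [Complex.exp_eq_one_iff]
  constructor
  · rintro ⟨n, hn⟩
    refine ⟨n, ?_⟩
    have h2 : (x : ℂ) * Complex.I = ((n : ℝ) * (2 * Real.pi) : ℝ) * Complex.I := by
      push_cast; linear_combination hn
    exact_mod_cast mul_right_cancel₀ Complex.I_ne_zero h2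
  · rintro ⟨n, hn⟩
    exact ⟨n, by rw [hn]; push_cast; ring⟩

lemma exp_I_eq_neg_one_iff' {x : ℝ} :
    Complex.exp (Complex.I * x) = -1 ↔ ∃ n : ℤ, x = (2 * n + 1) * Real.pi := by
  have hsplit : Complex.exp (Complex.I * x) =
      Complex.exp (Complex.I * ((x - Real.pi : ℝ))) * Complex.exp (Real.pi * Complex.I) := by
    rw [← Complex.exp_add]; congr 1; push_cast; ring
  rw [hsplit, Complex.exp_pi_mul_I, mul_neg_one, neg_eq_iff_eq_neg, neg_neg,
    exp_I_eq_one_iff']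
  constructor
  · rintro ⟨n, hn⟩; exact ⟨n, by linarith⟩
  · rintro ⟨n, hn⟩; exact ⟨n, by linarith⟩

open Complex Matrix Real in
theorem stmt_2 {n m : ℕ} (θ : Fin m → ℝ) (hθ : Function.Injective θ)
    (E : Fin m → Matrix (Fin n) (Fin n) ℝ)
    (hsym : ∀ r, (E r)ᵀ = E r)
    (horth : ∀ r s, E r * E s = if r = s then E r else 0)
    (hsum : ∑ r, E r = 1)
    (M : Matrix (Fin n) (Fin n) ℝ)
    (hM : M = ∑ r, θ r • E r)
    (u v : Fin n) (huv : u ≠ v)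
    (s : Fin m) (hs : 0 < E s v u)
    (τ : ℝ) (hτ : 0 < τ) :
    ‖∑ r, Complex.exp (Complex.I * τ * θ r) * (E r v u : ℂ)‖ =
        ∑ r, |E r v u| ↔
      (∀ r, 0 < E r v u → ∃ k : ℤ, τ * (θ s - θ r) = (2 * k) * Real.pi) ∧
      (∀ r, E r v u < 0 → ∃ k : ℤ, τ * (θ s - θ r) = (2 * k + 1) * Real.pi) := by
  have habs_exp : ∀ x y : ℝ, ‖Complex.exp (Complex.I * x * y)‖ = 1 := by
    intro x y
    rw [Complex.norm_exp]
    simp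
  have hzabs : ∀ r, ‖Complex.exp (Complex.I * τ * θ r) * (E r v u : ℂ)‖
      = |E r v u| := by
    intro r
    rw [norm_mul, habs_exp, one_mul, Complex.norm_real, Real.norm_eq_abs]
  have hkey : ∀ r, Complex.exp (Complex.I * τ * θ s) =
      Complex.exp (Complex.I * τ * θ r) * Complex.exp (Complex.I * ((τ * (θ s - θ r) : ℝ))) := by
    intro r
    rw [← Complex.exp_add]; push_cast; ring_nf
  constructor
  · -- forward
    intro hE
    have hpos : 0 < ∑ r, |E r v u| := by
      apply Finset.sum_pos' (fun r _ => abs_nonneg _)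
      exact ⟨s, Finset.mem_univ s, abs_pos.2 (ne_of_gt hs)⟩
    set S : ℂ := ∑ r, Complex.exp (Complex.I * τ * θ r) * (E r v u : ℂ) with hS
    have hSabs : ‖S‖ = ∑ r, |E r v u| := hE
    have habsne : ‖S‖ ≠ 0 := by rw [hSabs]; exact ne_of_gt hpos
    set w : ℂ := (starRingEnd ℂ) S / (‖S‖ : ℂ) with hw
    have hcast_ne : ((‖S‖ : ℝ) : ℂ) ≠ 0 := Complex.ofReal_ne_zero.2 habsne
    have hwS : w * S = (‖S‖ : ℂ) := by
      rw [hw, div_mul_eq_mul_div, mul_comm, Complex.mul_conj, Complex.normSq_eq_norm_sq]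
      push_cast
      rw [sq, mul_div_assoc, div_self hcast_ne, mul_one]
    have hwabs : ‖w‖ = 1 := by
      rw [hw, norm_div, Complex.norm_conj, Complex.norm_real, Real.norm_eq_abs,
        _root_.abs_of_nonneg (norm_nonneg S), div_self habsne]
    have habs_wz : ∀ r, ‖w * (Complex.exp (Complex.I * τ * θ r) * (E r v u : ℂ))‖
        = |E r v u| := by
      intro r
      rw [norm_mul, hwabs, one_mul, hzabs]
    have hle : ∀ r ∈ Finset.univ,
        (w * (Complex.exp (Complex.I * τ * θ r) * (E r v u : ℂ))).re ≤ |E r v u| := by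
      intro r _
      calc (w * (Complex.exp (Complex.I * τ * θ r) * (E r v u : ℂ))).re
          ≤ ‖w * (Complex.exp (Complex.I * τ * θ r) * (E r v u : ℂ))‖ :=
            Complex.re_le_norm _
        _ = |E r v u| := habs_wz r
    have hsum_re : ∑ r, (w * (Complex.exp (Complex.I * τ * θ r) * (E r v u : ℂ))).re
        = ∑ r, |E r v u| := by
      calc ∑ r, (w * (Complex.exp (Complex.I * τ * θ r) * (E r v u : ℂ))).re
          = (∑ r, w * (Complex.exp (Complex.I * τ * θ r) * (E r v u : ℂ))).re :=
            (Complex.re_sum _ _).symm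
        _ = (w * S).re := by rw [← Finset.mul_sum, ← hS]
        _ = ‖S‖ := by rw [hwS, Complex.ofReal_re]
        _ = ∑ r, |E r v u| := hSabs
    have heach := (Finset.sum_eq_sum_iff_of_le hle).1 hsum_re
    have heq : ∀ r, w * (Complex.exp (Complex.I * τ * θ r) * (E r v u : ℂ))
        = ((|E r v u| : ℝ) : ℂ) := by
      intro r
      have h1 : (w * (Complex.exp (Complex.I * τ * θ r) * (E r v u : ℂ))).re =
          ‖w * (Complex.exp (Complex.I * τ * θ r) * (E r v u : ℂ))‖ := by
        rw [habs_wz r]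
        exact heach r (Finset.mem_univ r)
      have h2 := re_eq_abs' h1
      rwa [habs_wz r] at h2
    have hcs : ((E s v u : ℝ) : ℂ) ≠ 0 := Complex.ofReal_ne_zero.2 (ne_of_gt hs)
    have hws : w * Complex.exp (Complex.I * τ * θ s) = 1 := by
      have h1 := heq s
      rw [abs_of_pos hs] at h1
      have h2 : w * Complex.exp (Complex.I * τ * θ s) * ((E s v u : ℝ) : ℂ)
          = 1 * ((E s v u : ℝ) : ℂ) := by rw [one_mul, mul_assoc]; exact h1
      exact mul_right_cancel₀ hcs h2
    have hexpne : ∀ r, Complex.exp (Complex.I * τ * θ r) ≠ 0 := fun r => Complex.exp_ne_zero _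
    have hmain : ∀ r, Complex.exp (Complex.I * τ * θ r) * ((E r v u : ℝ) : ℂ) =
        Complex.exp (Complex.I * τ * θ s) * ((|E r v u| : ℝ) : ℂ) := by
      intro r
      have h1 := heq r
      calc Complex.exp (Complex.I * τ * θ r) * ((E r v u : ℝ) : ℂ)
          = (w * Complex.exp (Complex.I * τ * θ s)) *
            (Complex.exp (Complex.I * τ * θ r) * ((E r v u : ℝ) : ℂ)) := by rw [hws, one_mul]
        _ = Complex.exp (Complex.I * τ * θ s) *
            (w * (Complex.exp (Complex.I * τ * θ r) * ((E r v u : ℝ) : ℂ))) := by ring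
        _ = Complex.exp (Complex.I * τ * θ s) * ((|E r v u| : ℝ) : ℂ) := by rw [h1]
    constructor
    · intro r hr
      have hcr : ((E r v u : ℝ) : ℂ) ≠ 0 := Complex.ofReal_ne_zero.2 (ne_of_gt hr)
      have h1 := hmain r
      rw [abs_of_pos hr] at h1
      have h2 : Complex.exp (Complex.I * τ * θ r) = Complex.exp (Complex.I * τ * θ s) :=
        mul_right_cancel₀ hcr h1
      have h3 : Complex.exp (Complex.I * τ * θ r) *
          Complex.exp (Complex.I * ((τ * (θ s - θ r) : ℝ))) =
          Complex.exp (Complex.I * τ * θ r) * 1 := by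
        rw [mul_one, ← hkey r, ← h2]
      have h4 := mul_left_cancel₀ (hexpne r) h3
      obtain ⟨k, hk⟩ := exp_I_eq_one_iff'.1 h4
      exact ⟨k, by rw [hk]; ring⟩
    · intro r hr
      have hcr : ((E r v u : ℝ) : ℂ) ≠ 0 := Complex.ofReal_ne_zero.2 (ne_of_lt hr)
      have h1 := hmain r
      rw [abs_of_neg hr] at h1
      have h2 : Complex.exp (Complex.I * τ * θ r) * ((E r v u : ℝ) : ℂ) =
          -Complex.exp (Complex.I * τ * θ s) * ((E r v u : ℝ) : ℂ) := by
        rw [h1]; push_cast; ring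
      have h3 : Complex.exp (Complex.I * τ * θ r) = -Complex.exp (Complex.I * τ * θ s) :=
        mul_right_cancel₀ hcr h2
      have h4 : Complex.exp (Complex.I * τ * θ r) *
          Complex.exp (Complex.I * ((τ * (θ s - θ r) : ℝ))) =
          Complex.exp (Complex.I * τ * θ r) * (-1) := by
        rw [← hkey r, h3]; ring
      have h5 := mul_left_cancel₀ (hexpne r) h4
      obtain ⟨k, hk⟩ := exp_I_eq_neg_one_iff'.1 h5
      exact ⟨k, hk⟩
  · -- backward
    rintro ⟨h1, h2⟩
    have hterm : ∀ r, Complex.exp (Complex.I * τ * θ r) * ((E r v u : ℝ) : ℂ)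
        = Complex.exp (Complex.I * τ * θ s) * ((|E r v u| : ℝ) : ℂ) := by
      intro r
      rcases lt_trichotomy (E r v u) 0 with hcr | hcr | hcr
      · obtain ⟨k, hk⟩ := h2 r hcr
        have hexp : Complex.exp (Complex.I * ((τ * (θ s - θ r) : ℝ))) = -1 :=
          exp_I_eq_neg_one_iff'.2 ⟨k, by rw [hk]⟩
        rw [hkey r, hexp, abs_of_neg hcr]
        push_cast; ring
      · rw [hcr]; simp
      · obtain ⟨k, hk⟩ := h1 r hcr
        have hexp : Complex.exp (Complex.I * ((τ * (θ s - θ r) : ℝ))) = 1 :=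
          exp_I_eq_one_iff'.2 ⟨k, by rw [hk]; ring⟩
        rw [hkey r, hexp, abs_of_pos hcr]
        push_cast; ring
    have hsum' : (∑ r, Complex.exp (Complex.I * τ * θ r) * (E r v u : ℂ))
        = Complex.exp (Complex.I * τ * θ s) * ((∑ r, |E r v u| : ℝ) : ℂ) := by
      rw [Finset.sum_congr rfl (fun r _ => hterm r), ← Finset.mul_sum]
      push_cast
      ring
    rw [hsum', norm_mul, habs_exp, one_mul, Complex.norm_real, Real.norm_eq_abs,
      _root_.abs_of_nonneg (Finset.sum_nonneg fun r _ => abs_nonneg _)]
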